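/- When acting on Weyl-group-invariant polynomials of the form f(x₁²,…,x_r²) (f symmetric), the type-C operator D_j x_j - (a/2)∑_{i<j}(σ_{ij}+s_{ij}) equals, in the coordinates y_j = x_j², the operator 2(U_j^A + (ι-1)/2 - 1/2), where U_j^A is the type-A Cherednik operator with parameter a. -/

import Mathlib

open MvPolynomial Finset

noncomputable section

abbrev Pol (r : ℕ) : Type := MvPolynomial (Fin r) ℂ

/-- Multiplication operator by a polynomial. -/
def mulOp {r : ℕ} (p : Pol r) : Module.End ℂ (Pol r) := LinearMap.mulLeft ℂ p

/-- Partial derivative operator. -/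
def pd {r : ℕ} (j : Fin r) : Module.End ℂ (Pol r) := (pderiv j).toLinearMap

/-- The transposition operator `s_{ij}` swapping the variables `i` and `j`. -/
def swOp {r : ℕ} (i j : Fin r) : Module.End ℂ (Pol r) :=
  (rename ⇑(Equiv.swap i j) : Pol r →ₐ[ℂ] Pol r).toLinearMap

/-- The sign change operator `σ_j : x_j ↦ -x_j`. -/
def negOp {r : ℕ} (j : Fin r) : Module.End ℂ (Pol r) :=
  (aeval (fun k : Fin r => if k = j then -(X j) else X k) : Pol r →ₐ[ℂ] Pol r).toLinearMap

/-- The signed transposition operator `σ_{ij} : x_i ↦ -x_j, x_j ↦ -x_i`. -/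
def sswOp {r : ℕ} (i j : Fin r) : Module.End ℂ (Pol r) :=
  (aeval (fun k : Fin r => if k = i then -(X j) else if k = j then -(X i) else X k)
    : Pol r →ₐ[ℂ] Pol r).toLinearMap

/-- Ordered product `f 0 * f 1 * ⋯ * f (r-1)` of operators. -/
def opProd {r : ℕ} (f : Fin r → Module.End ℂ (Pol r)) : Module.End ℂ (Pol r) :=
  ((List.finRange r).map f).prod

/-- The type-C Dunkl operator
`D_j = ∂_j + ((ι-1)/2) x_j⁻¹(1-σ_j) + (a/2) ∑_{i≠j} [(x_j-x_i)⁻¹(1-s_{ij}) + (x_j+x_i)⁻¹(1-σ_{ij})]`,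
with the difference-quotient operators given as data `q0, qs, qσ` pinned down by the
specifications below. -/
def dunklC {r : ℕ} (ι a : ℂ) (q0 : Fin r → Module.End ℂ (Pol r))
    (qs qσ : Fin r → Fin r → Module.End ℂ (Pol r)) (j : Fin r) : Module.End ℂ (Pol r) :=
  pd j + ((ι - 1) / 2) • q0 j + (a / 2) • ∑ i ∈ Finset.univ.erase j, (qs i j + qσ i j)

/-- Specification: `q0 j` is division of `(1 - σ_j) f` by `x_j`. -/
def QuotLong {r : ℕ} (q0 : Fin r → Module.End ℂ (Pol r)) : Prop :=
  ∀ j : Fin r, ∀ f : Pol r, X j * q0 j f = f - negOp j f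

/-- Specification: `qs i j` is division of `(1 - s_{ij}) f` by `x_j - x_i`. -/
def QuotS {r : ℕ} (qs : Fin r → Fin r → Module.End ℂ (Pol r)) : Prop :=
  ∀ i j : Fin r, i ≠ j → ∀ f : Pol r, (X j - X i) * qs i j f = f - swOp i j f

/-- Specification: `qσ i j` is division of `(1 - σ_{ij}) f` by `x_j + x_i`. -/
def QuotSig {r : ℕ} (qσ : Fin r → Fin r → Module.End ℂ (Pol r)) : Prop :=
  ∀ i j : Fin r, i ≠ j → ∀ f : Pol r, (X j + X i) * qσ i j f = f - sswOp i j f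

/-- The type-A Dunkl operator `D_j = ∂_j + (a/2) ∑_{i ≠ j} q i j`, where `q i j` is the
difference-quotient operator `f ↦ (y_j - y_i)⁻¹ (1 - s_{ij}) f` (given as data, pinned down
by the divisibility specification `DunklQuotA`). -/
def dunklA {r : ℕ} (a : ℂ) (q : Fin r → Fin r → Module.End ℂ (Pol r)) (j : Fin r) :
    Module.End ℂ (Pol r) :=
  pd j + (a / 2) • ∑ i ∈ Finset.univ.erase j, q i j

/-- Specification: `q i j` is division of `(1 - s_{ij}) f` by `y_j - y_i`. -/
def DunklQuotA {r : ℕ} (q : Fin r → Fin r → Module.End ℂ (Pol r)) : Prop :=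
  ∀ i j : Fin r, i ≠ j → ∀ f : Pol r,
    (X j - X i) * q i j f = f - swOp i j f

/-- The type-A Cherednik operator `U_j = D_j y_j - (a/2) ∑_{i<j} s_{ij}`. -/
def cherednikA {r : ℕ} (a : ℂ) (q : Fin r → Fin r → Module.End ℂ (Pol r)) (j : Fin r) :
    Module.End ℂ (Pol r) :=
  dunklA a q j * mulOp (X j) - (a / 2) • ∑ i ∈ Finset.univ.filter (fun i => i < j), swOp i j

/-- Substitution of squared variables: `f(y₁,…,y_r) ↦ f(x₁²,…,x_r²)`. -/
def sqVars {r : ℕ} (f : Pol r) : Pol r := aeval (fun k : Fin r => (X k) ^ 2) f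


lemma aeval_funext {F G : Fin r → Pol r} (h : ∀ k, F k = G k) (g : Pol r) :
    aeval F g = aeval G g := by rw [show F = G from funext h]

lemma sqVars_add (p q : Pol r) : sqVars (p + q) = sqVars p + sqVars q := by
  unfold sqVars; simp

lemma sqVars_mul (p q : Pol r) : sqVars (p * q) = sqVars p * sqVars q := by
  unfold sqVars; simp

lemma sqVars_X (k : Fin r) : sqVars (X k : Pol r) = X k ^ 2 := by
  unfold sqVars; simp

lemma sqVars_C (c : ℂ) : sqVars (C c : Pol r) = C c := by
  unfold sqVars; simp [algebraMap_eq]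

lemma sqVars_smul (c : ℂ) (p : Pol r) : sqVars (c • p) = c • sqVars p := by
  unfold sqVars; simp

lemma sqVars_sub (p q : Pol r) : sqVars (p - q) = sqVars p - sqVars q := by
  unfold sqVars; simp

lemma negOp_sqVars (j : Fin r) (g : Pol r) : negOp j (sqVars g) = sqVars g := by
  unfold negOp sqVars
  rw [AlgHom.toLinearMap_apply, comp_aeval_apply]
  apply aeval_funext
  intro k
  by_cases h : k = j <;> simp [h, neg_sq]

lemma swOp_sqVars (i j : Fin r) (g : Pol r) : swOp i j (sqVars g) = sqVars (swOp i j g) := by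
  unfold swOp sqVars
  simp only [AlgHom.toLinearMap_apply]
  rw [comp_aeval_apply _ (rename ⇑(Equiv.swap i j) : Pol r →ₐ[ℂ] Pol r), aeval_rename]
  apply aeval_funext
  intro k
  simp [Function.comp]

lemma sswOp_sqVars (i j : Fin r) (hij : i ≠ j) (g : Pol r) :
    sswOp i j (sqVars g) = sqVars (swOp i j g) := by
  unfold sswOp sqVars swOp
  simp only [AlgHom.toLinearMap_apply]
  rw [comp_aeval_apply, aeval_rename]
  apply aeval_funext
  intro k
  by_cases h1 : k = i
  · simp [h1, Function.comp, Equiv.swap_apply_left, neg_sq]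
  · by_cases h2 : k = j
    · simp [h1, h2, Function.comp, Equiv.swap_apply_right, neg_sq, (Ne.symm hij : j ≠ i)]
    · simp [h1, h2, Function.comp, Equiv.swap_apply_of_ne_of_ne h1 h2]

lemma negOp_X_mul (j : Fin r) (p : Pol r) : negOp j (X j * p) = -(X j * negOp j p) := by
  unfold negOp; simp

lemma swOp_X_mul (i j : Fin r) (p : Pol r) : swOp i j (X j * p) = X i * swOp i j p := by
  unfold swOp; simp [Equiv.swap_apply_right]

lemma sswOp_X_mul (i j : Fin r) (hij : i ≠ j) (p : Pol r) :
    sswOp i j (X j * p) = -(X i * sswOp i j p) := by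
  unfold sswOp; simp [Ne.symm hij]

lemma pderiv_sqVars (j : Fin r) (g : Pol r) :
    pderiv j (sqVars g) = 2 * X j * sqVars (pderiv j g) := by
  induction g using MvPolynomial.induction_on with
  | C a => simp [sqVars]
  | add p q hp hq => rw [sqVars_add, map_add, hp, hq, map_add, sqVars_add]; ring
  | mul_X p k hp =>
      rw [sqVars_mul, sqVars_X, pderiv_mul, hp, pderiv_mul, sqVars_add, sqVars_mul,
        sqVars_mul, sqVars_X]
      by_cases h : j = k
      · subst h
        have h1 : pderiv j ((X j : Pol r) ^ 2) = 2 * X j := by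
          rw [pow_two, pderiv_mul]; simp [pderiv_X]; ring
        have h2 : sqVars (pderiv j (X j : Pol r)) = 1 := by simp [pderiv_X, sqVars]
        rw [h1, h2]; ring
      · have h0 : pderiv j (X k : Pol r) = 0 := by
          simp [pderiv_X, Pi.single_eq_of_ne (Ne.symm h)]
        have h1 : pderiv j ((X k : Pol r) ^ 2) = 0 := by rw [pow_two, pderiv_mul, h0]; ring
        have h2 : sqVars (pderiv j (X k : Pol r)) = 0 := by rw [h0]; unfold sqVars; simp
        rw [h1, h2]; ring

lemma X_sub_ne_zero (i j : Fin r) (hij : i ≠ j) : (X j - X i : Pol r) ≠ 0 := by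
  intro H
  have := congrArg (eval (fun k : Fin r => if k = j then (1:ℂ) else 0)) H
  simp [hij] at this

lemma X_add_ne_zero (i j : Fin r) (hij : i ≠ j) : (X j + X i : Pol r) ≠ 0 := by
  intro H
  have := congrArg (eval (fun k : Fin r => if k = j then (1:ℂ) else 0)) H
  simp [hij] at this

/-- On even symmetric polynomials `f(x₁²,…,x_r²)`, the type-C operator
`D_j x_j - (a/2)∑_{i<j}(σ_{ij}+s_{ij})` equals `2(U_j^A + (ι-1)/2 - 1/2)` in the
squared variables `y_j = x_j²`, where `U_j^A` is the type-A Cherednik operator with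
parameter `a`. -/
theorem cherednikC_on_even {r : ℕ} (ι a : ℂ) (q0 : Fin r → Module.End ℂ (Pol r))
    (qs qσ qA : Fin r → Fin r → Module.End ℂ (Pol r))
    (hq0 : QuotLong q0) (hqs : QuotS qs) (hqσ : QuotSig qσ) (hqA : DunklQuotA qA)
    (j : Fin r) (f : Pol r) (hf : f.IsSymmetric) :
    (dunklC ι a q0 qs qσ j * mulOp (X j) -
        (a / 2) • ∑ i ∈ Finset.univ.filter (fun i => i < j), (sswOp i j + swOp i j))
      (sqVars f)
      = sqVars ((2 : ℂ) • (cherednikA a qA j f + ((ι - 1) / 2 - 1 / 2) • f)) := by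
  classical
  set g := sqVars f with hg
  set P := sqVars (pderiv j f) with hP
  have hsym : ∀ i : Fin r, swOp i j f = f := fun i => by
    simpa [swOp] using hf (Equiv.swap i j)
  have hswg : ∀ i : Fin r, swOp i j g = g := fun i => by
    rw [hg, swOp_sqVars, hsym i]
  have hsswg : ∀ i : Fin r, i ≠ j → sswOp i j g = g := fun i hi => by
    rw [hg, sswOp_sqVars i j hi, hsym i]
  have hnegg : negOp j g = g := negOp_sqVars j f
  have h0 : q0 j (X j * g) = g + g := by
    apply mul_left_cancel₀ (X_ne_zero (R := ℂ) j)
    rw [hq0 j (X j * g), negOp_X_mul, hnegg]; ring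
  have hqsv : ∀ i : Fin r, i ≠ j → qs i j (X j * g) = g := fun i hi => by
    apply mul_left_cancel₀ (X_sub_ne_zero i j hi)
    rw [hqs i j hi (X j * g), swOp_X_mul, hswg i]; ring
  have hqσv : ∀ i : Fin r, i ≠ j → qσ i j (X j * g) = g := fun i hi => by
    apply mul_left_cancel₀ (X_add_ne_zero i j hi)
    rw [hqσ i j hi (X j * g), sswOp_X_mul i j hi, hsswg i hi]; ring
  have hqAv : ∀ i : Fin r, i ≠ j → qA i j (X j * f) = f := fun i hi => by
    apply mul_left_cancel₀ (X_sub_ne_zero i j hi)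
    rw [hqA i j hi (X j * f), swOp_X_mul, hsym i]; ring
  have e1 : ∑ i ∈ Finset.univ.erase j, (qs i j (X j * g) + qσ i j (X j * g))
      = (((Finset.univ.erase j).card : ℂ)) • (g + g) := by
    have h : ∀ i ∈ Finset.univ.erase j, qs i j (X j * g) + qσ i j (X j * g) = g + g := by
      intro i hi
      have hij : i ≠ j := (Finset.mem_erase.mp hi).1
      rw [hqsv i hij, hqσv i hij]
    rw [Finset.sum_congr rfl h, Finset.sum_const, Nat.cast_smul_eq_nsmul]
  have e2 : ∑ i ∈ Finset.univ.filter (fun i => i < j), (sswOp i j g + swOp i j g)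
      = (((Finset.univ.filter (fun i => i < j)).card : ℂ)) • (g + g) := by
    have h : ∀ i ∈ Finset.univ.filter (fun i => i < j),
        sswOp i j g + swOp i j g = g + g := by
      intro i hi
      have hij : i ≠ j := ne_of_lt (Finset.mem_filter.mp hi).2
      rw [hsswg i hij, hswg i]
    rw [Finset.sum_congr rfl h, Finset.sum_const, Nat.cast_smul_eq_nsmul]
  have e3 : ∑ i ∈ Finset.univ.erase j, qA i j (X j * f)
      = (((Finset.univ.erase j).card : ℂ)) • f := by
    have h : ∀ i ∈ Finset.univ.erase j, qA i j (X j * f) = f := fun i hi =>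
      hqAv i (Finset.mem_erase.mp hi).1
    rw [Finset.sum_congr rfl h, Finset.sum_const, Nat.cast_smul_eq_nsmul]
  have e4 : ∑ i ∈ Finset.univ.filter (fun i => i < j), swOp i j f
      = (((Finset.univ.filter (fun i => i < j)).card : ℂ)) • f := by
    have h : ∀ i ∈ Finset.univ.filter (fun i => i < j), swOp i j f = f := fun i _ =>
      hsym i
    rw [Finset.sum_congr rfl h, Finset.sum_const, Nat.cast_smul_eq_nsmul]
  have hXd : pderiv j (X j * g) = g + (2 : ℂ) • (X j * (X j * P)) := by
    rw [pderiv_mul, pderiv_X_self, hg, pderiv_sqVars, ← hP]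
    simp only [smul_eq_C_mul, map_ofNat]
    ring
  have hR : cherednikA a qA j f + ((ι - 1) / 2 - 1 / 2) • f
      = f + X j * pderiv j f
        + (a / 2) • ((((Finset.univ.erase j).card : ℂ)) • f)
        - (a / 2) • ((((Finset.univ.filter (fun i => i < j)).card : ℂ)) • f)
        + ((ι - 1) / 2 - 1 / 2) • f := by
    simp only [cherednikA, dunklA, mulOp, pd, LinearMap.sub_apply, Module.End.mul_apply,
      LinearMap.add_apply, LinearMap.smul_apply, LinearMap.sum_apply,
      LinearMap.mulLeft_apply, Derivation.coeFn_coe]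
    rw [e3, e4, pderiv_mul, pderiv_X_self, one_mul]
  -- expand the left-hand side
  simp only [dunklC, mulOp, pd, LinearMap.sub_apply, Module.End.mul_apply,
    LinearMap.add_apply, LinearMap.smul_apply, LinearMap.sum_apply,
    LinearMap.mulLeft_apply, Derivation.coeFn_coe]
  rw [e1, e2, hXd, h0, hR]
  rw [sqVars_smul, sqVars_add, sqVars_sub, sqVars_add, sqVars_add, sqVars_mul, sqVars_X,
    sqVars_smul, sqVars_smul, sqVars_smul, sqVars_smul, sqVars_smul, ← hg, ← hP, pow_two, mul_assoc]
  module
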